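/- Let G_m be a bounded Vilenkin group, α ∈ (0,1), and M_A ≤ n < M_{A+1}. Then the (C,−α) Cesàro kernel K_n^{−α}(x) = (1/A_{n−1}^{−α}) Σ_{ν=0}^{n−1} A_{n−1−ν}^{−α} ψ_ν(x) satisfies |K_n^{−α}(x)| ≤ (c(α)/|A_{n−1}^{−α}|) Σ_{l=0}^{A} M_l^{−α} D_{M_l}(x) for all x ∈ G_m, where c(α) depends only on α and the bound sup_k m_k. -/

import Mathlib

open scoped BigOperators
open Complex MeasureTheory

noncomputable section
namespace Vilenkin

/-- The generalized powers `M 0 = 1`, `M (k+1) = m k * M k`. -/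
def M (m : ℕ → ℕ) : ℕ → ℕ
  | 0 => 1
  | k + 1 => m k * M m k

/-- The Vilenkin group: complete direct product of the cyclic groups `ZMod (m k)`. -/
abbrev G (m : ℕ → ℕ) := ∀ k, ZMod (m k)

instance (n : ℕ) : MeasurableSpace (ZMod n) := ⊤
instance (n : ℕ) : TopologicalSpace (ZMod n) := ⊥

/-- `k`-th digit of `n` in the generalized number system based on `m`. -/
def dig (m : ℕ → ℕ) (n k : ℕ) : ℕ := (n / M m k) % m k

/-- The generalized Rademacher functions. -/
def rad (m : ℕ → ℕ) (k : ℕ) (x : G m) : ℂ :=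
  Complex.exp (2 * Real.pi * Complex.I * ((x k).val : ℝ) / (m k : ℝ))

/-- The Vilenkin functions. -/
def psi (m : ℕ → ℕ) (n : ℕ) (x : G m) : ℂ :=
  ∏ k ∈ Finset.range (n + 1), rad m k x ^ dig m n k

/-- The Dirichlet kernels. -/
def D (m : ℕ → ℕ) (n : ℕ) (x : G m) : ℂ := ∑ j ∈ Finset.range n, psi m j x

/-- The basic neighbourhood `I_k = {y : y_0 = ⋯ = y_{k-1} = 0}`. -/
def Icyl (m : ℕ → ℕ) (k : ℕ) : Set (G m) := {y | ∀ j < k, y j = 0}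

/-- The coset representative `Z_β^{(k)}`, supported on coordinates `< k`,
with `β = ∑_{j<k} x_j · (M_k / M_{j+1})`. -/
def Z (m : ℕ → ℕ) (k β : ℕ) : G m :=
  fun j => if j < k then ((β / (M m k / M m (j + 1))) % m j : ℕ) else 0

/-- The `k`-th coordinate unit vector `e_k`. -/
def e (m : ℕ → ℕ) (k : ℕ) : G m := fun j => if j = k then 1 else 0

/-- Cesàro numbers `A_0^α = 1`, `A_n^α = (α+1)⋯(α+n)/n!`. -/
def A (α : ℝ) (n : ℕ) : ℝ := ∏ j ∈ Finset.range n, (α + j + 1) / (j + 1)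

/-- Partial value `n^{(k-1)} = ∑_{j<k} n_j M_j` of the expansion of `n`. -/
def npart (m : ℕ → ℕ) (n k : ℕ) : ℕ := ∑ j ∈ Finset.range k, dig m n j * M m j

/-- `μ` is the (normalized Haar) probability measure on `G m` iff it gives each
cylinder of depth `k` measure `1 / M_k`. -/
def IsHaar (m : ℕ → ℕ) (μ : Measure (G m)) : Prop :=
  IsProbabilityMeasure μ ∧
    ∀ (k : ℕ) (z : G m), μ {y | ∀ j < k, y j = z j} = 1 / (M m k : ENNReal)

/-- The `(C,a)` Cesàro kernel `K_n^{a}`. -/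
def K (m : ℕ → ℕ) (a : ℝ) (n : ℕ) (x : G m) : ℂ :=
  (A a (n - 1) : ℂ)⁻¹ * ∑ ν ∈ Finset.range n, (A a (n - 1 - ν) : ℝ) * psi m ν x

/-- Vilenkin-Fourier coefficients. -/
def fhat (m : ℕ → ℕ) (μ : Measure (G m)) (f : G m → ℂ) (k : ℕ) : ℂ :=
  ∫ t, f t * (starRingEnd ℂ) (psi m k t) ∂μ

/-- Partial sums of the Vilenkin-Fourier series. -/
def S (m : ℕ → ℕ) (μ : Measure (G m)) (f : G m → ℂ) (n : ℕ) (x : G m) : ℂ :=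
  ∑ k ∈ Finset.range n, fhat m μ f k * psi m k x

/-- The `(C, a)` Cesàro means of the Vilenkin-Fourier series,
`σ_n^{a} f = (1/A_{n-1}^{a}) ∑_{ν=0}^{n} A_{n-ν}^{a-1} S_ν f`. -/
def ces (m : ℕ → ℕ) (μ : Measure (G m)) (a : ℝ) (n : ℕ) (f : G m → ℂ) (x : G m) : ℂ :=
  (A a (n - 1) : ℂ)⁻¹ * ∑ ν ∈ Finset.range (n + 1), (A (a - 1) (n - ν) : ℝ) * S m μ f ν x

/-- Oscillation of `f` on the set `E`. -/
def osc {m : ℕ → ℕ} (f : G m → ℂ) (E : Set (G m)) : ℝ :=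
  ⨆ p : E × E, ‖f p.1 - f p.2‖

/-- `ν(M_k, f) = ∑_{β=0}^{M_k-1} ω(f, I_k + Z_β^{(k)})`. -/
def nu (m : ℕ → ℕ) (f : G m → ℂ) (k : ℕ) : ℝ :=
  ∑ β ∈ Finset.range (M m k), osc f ((Z m k β + ·) '' Icyl m k)


section AuxArith
variable {m : ℕ → ℕ}

lemma M_pos (hm : ∀ k, 2 ≤ m k) (k : ℕ) : 0 < M m k := by
  induction k with
  | zero => simp [M]
  | succ k ih => exact Nat.mul_pos (lt_of_lt_of_le (by norm_num) (hm k)) ih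

lemma two_pow_le_M (hm : ∀ k, 2 ≤ m k) (k : ℕ) : 2 ^ k ≤ M m k := by
  induction k with
  | zero => simp [M]
  | succ k ih =>
    have := Nat.mul_le_mul (hm k) ih
    simpa [M, pow_succ, Nat.mul_comm] using this

lemma M_mono (hm : ∀ k, 2 ≤ m k) {k l : ℕ} (h : k ≤ l) : M m k ≤ M m l := by
  induction l with
  | zero => simp [Nat.le_zero.mp h]
  | succ l ih =>
    rcases Nat.lt_succ_iff_lt_or_eq.mp (Nat.lt_succ_of_le h) with h' | h'
    · calc M m k ≤ M m l := ih (Nat.lt_succ_iff.mp h')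
        _ ≤ m l * M m l := Nat.le_mul_of_pos_left _ (lt_of_lt_of_le (by norm_num) (hm l))
        _ = M m (l+1) := rfl
    · subst h'; exact le_rfl

lemma lt_M_of_le (hm : ∀ k, 2 ≤ m k) {n k : ℕ} (h : n + 1 ≤ k) : n < M m k :=
  lt_of_lt_of_le
    (lt_of_lt_of_le (Nat.lt_two_pow_self (n := n)) (Nat.pow_le_pow_right (by norm_num) (Nat.le_of_succ_le h)))
    (two_pow_le_M hm k)

lemma M_dvd_M (m : ℕ → ℕ) {k l : ℕ} (h : k ≤ l) : ∃ P, M m l = M m k * P := by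
  induction l with
  | zero => exact ⟨1, by simp [Nat.le_zero.mp h, M]⟩
  | succ l ih =>
    rcases Nat.lt_succ_iff_lt_or_eq.mp (Nat.lt_succ_of_le h) with h' | h'
    · obtain ⟨P, hP⟩ := ih (Nat.lt_succ_iff.mp h')
      exact ⟨P * m l, by show m l * M m l = _; rw [hP]; ring⟩
    · subst h'; exact ⟨1, by simp⟩

lemma M_dvd_M' (m : ℕ → ℕ) {k l : ℕ} (h : k < l) : ∃ c, M m l = M m k * (m k * c) := by
  induction l with
  | zero => omega
  | succ l ih =>
    rcases Nat.lt_succ_iff_lt_or_eq.mp h with h' | h'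
    · obtain ⟨c, hc⟩ := ih h'
      exact ⟨c * m l, by show m l * M m l = _; rw [hc]; ring⟩
    · subst h'; exact ⟨1, by show m k * M m k = _; ring⟩

lemma dig_eq_zero_of_lt {n k : ℕ} (h : n < M m k) : dig m n k = 0 := by
  simp [dig, Nat.div_eq_of_lt h]

lemma dig_tM_low {s t k : ℕ} (hm : ∀ k, 2 ≤ m k) (hk : k < s) : dig m (t * M m s) k = 0 := by
  obtain ⟨c, hc⟩ := M_dvd_M' m hk
  have h0 := M_pos hm k
  simp only [dig, hc]
  rw [show t * (M m k * (m k * c)) = (t * (m k * c)) * M m k by ring,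
    Nat.mul_div_cancel _ h0, Nat.mul_mod, Nat.mul_mod_right]
  simp

lemma dig_add_low {s t r k : ℕ} (hm : ∀ k, 2 ≤ m k) (hk : k < s) :
    dig m (t * M m s + r) k = dig m r k := by
  obtain ⟨c, hc⟩ := M_dvd_M' m hk
  have h0 := M_pos hm k
  simp only [dig, hc]
  rw [show t * (M m k * (m k * c)) + r = M m k * (t * (m k * c)) + r by ring,
    Nat.mul_add_div h0]
  rw [show t * (m k * c) = m k * (t * c) by ring, add_comm, Nat.add_mul_mod_self_left]

lemma dig_add_high {s t r k : ℕ} (hm : ∀ k, 2 ≤ m k) (hr : r < M m s) (hk : s ≤ k) :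
    dig m (t * M m s + r) k = dig m (t * M m s) k := by
  obtain ⟨P, hP⟩ := M_dvd_M m hk
  have h0 := M_pos hm s
  simp only [dig, hP, ← Nat.div_div_eq_div_mul,
    show t * M m s = M m s * t from mul_comm _ _]
  rw [Nat.mul_add_div h0, Nat.div_eq_of_lt hr, Nat.mul_div_cancel_left _ h0, add_zero]

end AuxArith
section AuxPsi
variable {m : ℕ → ℕ}

lemma abs_rad (k : ℕ) (x : G m) : ‖rad m k x‖ = 1 := by
  rw [rad, show 2 * Real.pi * Complex.I * ((x k).val : ℝ) / (m k : ℝ)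
      = (((2 * Real.pi * (x k).val / (m k : ℝ) : ℝ)) : ℂ) * Complex.I by push_cast; ring]
  rw [Complex.norm_exp]
  simp

lemma abs_psi (n : ℕ) (x : G m) : ‖psi m n x‖ = 1 := by
  rw [psi, norm_prod]
  simp [abs_rad]

lemma rad_eq_one {k : ℕ} {x : G m} (h : x k = 0) : rad m k x = 1 := by
  simp [rad, h]

lemma rad_pow (hm : ∀ k, 2 ≤ m k) (k : ℕ) (x : G m) : rad m k x ^ (m k) = 1 := by
  have hmk : (m k : ℂ) ≠ 0 := Nat.cast_ne_zero.mpr (by have := hm k; omega)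
  rw [rad, ← Complex.exp_nat_mul]
  rw [show (m k : ℂ) * (2 * Real.pi * Complex.I * ((x k).val : ℝ) / (m k : ℝ))
      = ((x k).val : ℤ) * (2 * Real.pi * Complex.I) by
    push_cast
    field_simp]
  exact Complex.exp_int_mul_two_pi_mul_I _

lemma rad_ne_one (hm : ∀ k, 2 ≤ m k) {k : ℕ} {x : G m} (h : x k ≠ 0) : rad m k x ≠ 1 := by
  have hpos : 0 < m k := lt_of_lt_of_le (by norm_num) (hm k)
  haveI : NeZero (m k) := ⟨hpos.ne'⟩
  have hv0 : (x k).val ≠ 0 := fun h0 => h ((ZMod.val_eq_zero _).mp h0)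
  have hvlt : (x k).val < m k := ZMod.val_lt (x k)
  rw [rad]
  intro heq
  rw [Complex.exp_eq_one_iff] at heq
  obtain ⟨j, hj⟩ := heq
  have h2πI : (2 * (Real.pi : ℂ) * Complex.I) ≠ 0 := by
    have : (Real.pi : ℂ) ≠ 0 := by
      exact_mod_cast Complex.ofReal_ne_zero.mpr Real.pi_ne_zero
    exact mul_ne_zero (mul_ne_zero two_ne_zero this) Complex.I_ne_zero
  have key : (((x k).val : ℂ)) / (m k : ℂ) = (j : ℂ) := by
    apply mul_left_cancel₀ h2πI
    calc (2 * (Real.pi : ℂ) * Complex.I) * (((x k).val : ℂ) / (m k : ℂ))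
        = 2 * Real.pi * Complex.I * (((x k).val : ℝ) : ℂ) / ((m k : ℝ) : ℂ) := by
          push_cast; ring
      _ = (j : ℂ) * (2 * Real.pi * Complex.I) := hj
      _ = (2 * (Real.pi : ℂ) * Complex.I) * (j : ℂ) := by ring
  have keyR : ((x k).val : ℝ) / (m k : ℝ) = (j : ℝ) := by
    have := key
    rw [show (((x k).val : ℂ)) / (m k : ℂ)
        = ((((x k).val : ℝ) / (m k : ℝ) : ℝ) : ℂ) by push_cast; ring] at this
    exact_mod_cast this
  have hmR : (0 : ℝ) < m k := by exact_mod_cast hpos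
  have h1 : (0 : ℝ) < ((x k).val : ℝ) / (m k : ℝ) := by
    apply div_pos _ hmR
    exact_mod_cast Nat.pos_of_ne_zero hv0
  have h2 : ((x k).val : ℝ) / (m k : ℝ) < 1 := by
    rw [div_lt_one hmR]
    exact_mod_cast hvlt
  rw [keyR] at h1 h2
  have : 0 < j := by exact_mod_cast h1
  have : j < 1 := by exact_mod_cast h2
  omega

lemma psi_eq_prod (hm : ∀ k, 2 ≤ m k) {n N : ℕ} (h : n < N) (x : G m) :
    psi m n x = ∏ k ∈ Finset.range N, rad m k x ^ dig m n k := by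
  rw [psi]
  apply Finset.prod_subset
  · exact Finset.range_subset_range.mpr h
  · intro k _ hk
    rw [Finset.mem_range, not_lt] at hk
    rw [dig_eq_zero_of_lt (lt_M_of_le hm hk), pow_zero]

lemma psi_mul (hm : ∀ k, 2 ≤ m k) {s t r : ℕ} (hr : r < M m s) (x : G m) :
    psi m (t * M m s + r) x = psi m (t * M m s) x * psi m r x := by
  set N := t * M m s + r + 1 with hN
  rw [psi_eq_prod hm (show t * M m s + r < N by omega) x,
    psi_eq_prod hm (show t * M m s < N by omega) x,
    psi_eq_prod hm (show r < N by omega) x, ← Finset.prod_mul_distrib]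
  apply Finset.prod_congr rfl
  intro k _
  rw [← pow_add]
  congr 1
  rcases lt_or_ge k s with hk | hk
  · rw [dig_add_low hm hk, dig_tM_low hm hk, zero_add]
  · rw [dig_add_high hm hr hk,
      dig_eq_zero_of_lt (lt_of_lt_of_le hr (M_mono hm hk)), add_zero]

lemma psi_uM (hm : ∀ k, 2 ≤ m k) {s u : ℕ} (hu : u < m s) (x : G m) :
    psi m (u * M m s) x = rad m s x ^ u := by
  have huM : u * M m s < M m (s + 1) := by
    show u * M m s < m s * M m s
    have := M_pos hm s
    exact Nat.mul_lt_mul_of_lt_of_le hu le_rfl this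
  rw [psi_eq_prod hm (show u * M m s < u * M m s + s + 1 by omega) x]
  rw [Finset.prod_eq_single s]
  · congr 1
    rw [dig, Nat.mul_div_cancel _ (M_pos hm s), Nat.mod_eq_of_lt hu]
  · intro k _ hk
    rcases lt_or_ge k s with h' | h'
    · rw [dig_tM_low hm h', pow_zero]
    · have : u * M m s < M m k := lt_of_lt_of_le huM (M_mono hm (by omega))
      rw [dig_eq_zero_of_lt this, pow_zero]
  · intro hs
    exfalso
    exact hs (Finset.mem_range.mpr (by omega))

lemma psi_cyl_eq_one (hm : ∀ k, 2 ≤ m k) {s r : ℕ} {x : G m} (hx : x ∈ Icyl m s)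
    (hr : r < M m s) : psi m r x = 1 := by
  rw [psi]
  apply Finset.prod_eq_one
  intro k _
  rcases lt_or_ge k s with h' | h'
  · rw [rad_eq_one (hx k h'), one_pow]
  · rw [dig_eq_zero_of_lt (lt_of_lt_of_le hr (M_mono hm h')), pow_zero]

end AuxPsi
section AuxD
variable {m : ℕ → ℕ}

lemma geom_rad_zero (hm : ∀ k, 2 ≤ m k) {s : ℕ} {x : G m} (h : x s ≠ 0) :
    ∑ u ∈ Finset.range (m s), rad m s x ^ u = 0 := by
  rw [geom_sum_eq (rad_ne_one hm h), rad_pow hm, sub_self, zero_div]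

lemma geom_rad_one {s : ℕ} {x : G m} (h : x s = 0) :
    ∑ u ∈ Finset.range (m s), rad m s x ^ u = (m s : ℂ) := by
  simp [rad_eq_one h]

lemma sum_range_blocks (f : ℕ → ℂ) (Q Mv R : ℕ) :
    ∑ ν ∈ Finset.range (Q * Mv + R), f ν =
      (∑ t ∈ Finset.range Q, ∑ r ∈ Finset.range Mv, f (t * Mv + r)) +
        ∑ r ∈ Finset.range R, f (Q * Mv + r) := by
  rw [Finset.sum_range_add]
  congr 1
  induction Q with
  | zero => simp
  | succ Q ih =>
    rw [show (Q+1) * Mv = Q * Mv + Mv by ring, Finset.sum_range_add, ih,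
      Finset.sum_range_succ]

open scoped Classical in
lemma D_M_eq (hm : ∀ k, 2 ≤ m k) (l : ℕ) (x : G m) :
    D m (M m l) x = if x ∈ Icyl m l then (M m l : ℂ) else 0 := by
  induction l with
  | zero =>
    have : x ∈ Icyl m 0 := by intro j hj; omega
    simp [D, M, this, psi, dig]
  | succ l ih =>
    have hstep : D m (M m (l+1)) x =
        (∑ u ∈ Finset.range (m l), rad m l x ^ u) * D m (M m l) x := by
      rw [D, show M m (l+1) = m l * M m l from rfl,
        show m l * M m l = m l * M m l + 0 by ring]
      rw [sum_range_blocks (fun ν => psi m ν x) (m l) (M m l) 0]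
      simp only [Finset.range_zero, Finset.sum_empty, add_zero]
      rw [Finset.sum_mul]
      apply Finset.sum_congr rfl
      intro u hu
      rw [Finset.mem_range] at hu
      rw [D, Finset.mul_sum]
      apply Finset.sum_congr rfl
      intro r hr
      rw [Finset.mem_range] at hr
      rw [psi_mul hm hr x, psi_uM hm hu x]
    rw [hstep, ih]
    by_cases hc : x ∈ Icyl m (l+1)
    · have hl : x ∈ Icyl m l := fun j hj => hc j (by omega)
      have hxl : x l = 0 := hc l (by omega)
      rw [if_pos hc, if_pos hl, geom_rad_one hxl,
        show M m (l+1) = m l * M m l from rfl]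
      push_cast
      ring
    · rw [if_neg hc]
      by_cases hl : x ∈ Icyl m l
      · have hxl : x l ≠ 0 := by
          intro h0
          exact hc (fun j hj => by
            rcases Nat.lt_succ_iff_lt_or_eq.mp hj with h' | h'
            · exact hl j h'
            · subst h'; exact h0)
        rw [if_pos hl, geom_rad_zero hm hxl, zero_mul]
      · rw [if_neg hl, mul_zero]

lemma abs_partial_psi_le (hm : ∀ k, 2 ≤ m k) {s : ℕ} {x : G m} (h : x s ≠ 0) (T : ℕ) :
    ‖∑ t ∈ Finset.range T, psi m (t * M m s) x‖ ≤ (m s : ℝ) := by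
  have hT : T = (T / m s) * m s + T % m s := by
    rw [Nat.mul_comm]; exact (Nat.div_add_mod T (m s)).symm
  rw [hT, sum_range_blocks (fun t => psi m (t * M m s) x) _ _ _]
  have hMs1 : ∀ v u : ℕ, u < m s →
      psi m ((v * m s + u) * M m s) x = psi m (v * M m (s+1)) x * rad m s x ^ u := by
    intro v u hu
    have huM : u * M m s < M m (s+1) := by
      show u * M m s < m s * M m s
      exact Nat.mul_lt_mul_of_lt_of_le hu le_rfl (M_pos hm s)
    rw [show (v * m s + u) * M m s = v * M m (s+1) + u * M m s by
      show _ = v * (m s * M m s) + _; ring]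
    rw [psi_mul hm huM x, psi_uM hm hu x]
  have hzero : ∀ v, ∑ u ∈ Finset.range (m s), psi m ((v * m s + u) * M m s) x = 0 := by
    intro v
    have : ∑ u ∈ Finset.range (m s), psi m ((v * m s + u) * M m s) x
        = psi m (v * M m (s+1)) x * ∑ u ∈ Finset.range (m s), rad m s x ^ u := by
      rw [Finset.mul_sum]
      exact Finset.sum_congr rfl fun u hu => hMs1 v u (Finset.mem_range.mp hu)
    rw [this, geom_rad_zero hm h, mul_zero]
  simp only [hzero, Finset.sum_const_zero, zero_add]
  calc ‖∑ r ∈ Finset.range (T % m s), psi m ((T / m s * m s + r) * M m s) x‖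
      ≤ ∑ r ∈ Finset.range (T % m s), ‖psi m ((T / m s * m s + r) * M m s) x‖ := by
        exact norm_sum_le _ _
    _ = ∑ r ∈ Finset.range (T % m s), 1 := by
        exact Finset.sum_congr rfl fun r _ => abs_psi _ x
    _ = ((T % m s : ℕ) : ℝ) := by simp
    _ ≤ ((m s : ℕ) : ℝ) := by
        have := Nat.mod_lt T (show 0 < m s by have := hm s; omega)
        exact Nat.cast_le.mpr this.le

end AuxD
section AuxA
variable {α : ℝ}

lemma A_pos (hα1 : α < 1) (k : ℕ) : 0 < A (-α) k := by
  apply Finset.prod_pos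
  intro j _
  apply div_pos _ (by positivity)
  have : (0:ℝ) ≤ j := Nat.cast_nonneg j
  linarith

lemma A_antitone (hα0 : 0 < α) (hα1 : α < 1) : Antitone (A (-α)) := by
  apply antitone_nat_of_succ_le
  intro k
  rw [A, Finset.prod_range_succ, ← A]
  have h1 : (-α + k + 1) / ((k:ℝ) + 1) ≤ 1 := by
    rw [div_le_one (by positivity)]
    linarith
  calc A (-α) k * ((-α + k + 1) / ((k:ℝ) + 1)) ≤ A (-α) k * 1 :=
      mul_le_mul_of_nonneg_left h1 (A_pos hα1 k).le
    _ = A (-α) k := mul_one _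

lemma prod_succ_div (k : ℕ) : ∏ j ∈ Finset.range k, (((j:ℝ) + 2) / ((j:ℝ) + 1)) = (k:ℝ) + 1 := by
  induction k with
  | zero => simp
  | succ k ih =>
    rw [Finset.prod_range_succ, ih]
    have : ((k:ℝ) + 1) ≠ 0 := by positivity
    field_simp
    push_cast
    ring

lemma A_le_rpow (hα0 : 0 < α) (hα1 : α < 1) (k : ℕ) :
    A (-α) k ≤ ((k:ℝ) + 1) ^ (-α) := by
  have hterm : ∀ j : ℕ, (-α + j + 1) / ((j:ℝ) + 1) ≤ (((j:ℝ) + 2) / ((j:ℝ) + 1)) ^ (-α) := by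
    intro j
    have hj1 : (0:ℝ) < (j:ℝ) + 1 := by positivity
    set b : ℝ := 1 / ((j:ℝ) + 1) with hb
    have hbpos : 0 < b := by positivity
    have hble : b ≤ 1 := by
      rw [hb, div_le_one hj1]; linarith [Nat.cast_nonneg (α := ℝ) j]
    have hq : ((j:ℝ) + 2) / ((j:ℝ) + 1) = 1 + b := by
      rw [hb]; field_simp; ring
    have hBern : (1 + b) ^ α ≤ 1 + α * b :=
      _root_.rpow_one_add_le_one_add_mul_self (by linarith) hα0.le hα1.le
    have hpow_pos : 0 < (1 + b) ^ α := Real.rpow_pos_of_pos (by linarith) α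
    have hLHS : (-α + j + 1) / ((j:ℝ) + 1) = 1 - α * b := by
      rw [hb]; field_simp; ring
    rw [hq, hLHS, Real.rpow_neg (by linarith), ← one_div]
    rw [le_div_iff₀ hpow_pos]
    have hab : α * b ≤ 1 := by nlinarith
    calc (1 - α * b) * (1 + b) ^ α ≤ (1 - α * b) * (1 + α * b) :=
        mul_le_mul_of_nonneg_left hBern (by linarith)
      _ ≤ 1 := by nlinarith [sq_nonneg (α * b)]
  have step1 : A (-α) k ≤ ∏ j ∈ Finset.range k, (((j:ℝ) + 2) / ((j:ℝ) + 1)) ^ (-α) := by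
    rw [A]
    apply Finset.prod_le_prod
    · intro j _
      apply div_nonneg _ (by positivity)
      have : (0:ℝ) ≤ j := Nat.cast_nonneg j
      linarith
    · intro j _; exact hterm j
  have step2 : ∏ j ∈ Finset.range k, (((j:ℝ) + 2) / ((j:ℝ) + 1)) ^ (-α)
      = ((k:ℝ) + 1) ^ (-α) := by
    rw [Real.finset_prod_rpow _ _ (fun j _ => by positivity) (-α), prod_succ_div]
  rw [← step2]
  exact step1

lemma sum_rpow_le (hα0 : 0 < α) (hα1 : α < 1) (N : ℕ) :
    ∑ k ∈ Finset.range N, ((k:ℝ) + 1) ^ (-α) ≤ (N:ℝ) ^ (1 - α) / (1 - α) := by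
  have hp : 0 < 1 - α := by linarith
  induction N with
  | zero => simp [Real.zero_rpow hp.ne']
  | succ N ih =>
    rw [Finset.sum_range_succ]
    set b : ℝ := (N:ℝ) + 1 with hbdef
    have hb1 : 1 ≤ b := by
      rw [hbdef]
      have : (0:ℝ) ≤ (N:ℝ) := Nat.cast_nonneg N
      linarith
    have hbpos : 0 < b := by linarith
    have key : (N:ℝ) ^ (1-α) + (1-α) * b ^ (-α) ≤ b ^ (1-α) := by
      have hNb : (N:ℝ) = b * (1 - 1/b) := by
        rw [hbdef]; field_simp; ring
      have h1b : (0:ℝ) ≤ 1 - 1/b := by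
        have : 1/b ≤ 1 := by rw [div_le_one hbpos]; exact hb1
        linarith
      have hBern : (1 - 1/b) ^ (1-α) ≤ 1 - (1-α) / b := by
        have := _root_.rpow_one_add_le_one_add_mul_self
          (show (-1:ℝ) ≤ -(1/b) by
            have : 1/b ≤ 1 := by rw [div_le_one hbpos]; exact hb1
            linarith) hp.le (by linarith : 1 - α ≤ 1)
        rw [show 1 + -(1/b) = 1 - 1/b by ring] at this
        calc (1 - 1/b) ^ (1-α) ≤ 1 + (1-α) * -(1/b) := this
          _ = 1 - (1-α)/b := by ring
      have hbma : b ^ (-α) = b ^ (1-α) / b := by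
        rw [show (-α) = (1-α) - 1 by ring, Real.rpow_sub hbpos, Real.rpow_one]
      calc (N:ℝ) ^ (1-α) + (1-α) * b ^ (-α)
          = (b * (1 - 1/b)) ^ (1-α) + (1-α) * b ^ (-α) := by rw [← hNb]
        _ = b ^ (1-α) * (1 - 1/b) ^ (1-α) + (1-α) * b ^ (-α) := by
            rw [Real.mul_rpow hbpos.le h1b]
        _ ≤ b ^ (1-α) * (1 - (1-α)/b) + (1-α) * b ^ (-α) := by
            have := Real.rpow_nonneg hbpos.le (1-α)
            nlinarith [hBern]
        _ = b ^ (1-α) - (1-α) * (b ^ (1-α) / b) + (1-α) * b ^ (-α) := by ring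
        _ = b ^ (1-α) := by rw [← hbma]; ring
    calc (∑ k ∈ Finset.range N, ((k:ℝ) + 1) ^ (-α)) + b ^ (-α)
        ≤ (N:ℝ) ^ (1-α) / (1-α) + b ^ (-α) := by linarith [ih]
      _ = ((N:ℝ) ^ (1-α) + (1-α) * b ^ (-α)) / (1-α) := by field_simp
      _ ≤ b ^ (1-α) / (1-α) := by
          exact (div_le_div_iff_of_pos_right hp).mpr key
      _ = ((N+1:ℕ):ℝ) ^ (1-α) / (1-α) := by rw [hbdef]; norm_cast
lemma sum_A_le (hα0 : 0 < α) (hα1 : α < 1) (N : ℕ) :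
    ∑ k ∈ Finset.range N, A (-α) k ≤ (N:ℝ) ^ (1 - α) / (1 - α) := by
  calc ∑ k ∈ Finset.range N, A (-α) k ≤ ∑ k ∈ Finset.range N, ((k:ℝ) + 1) ^ (-α) :=
      Finset.sum_le_sum fun k _ => A_le_rpow hα0 hα1 k
    _ ≤ (N:ℝ) ^ (1 - α) / (1 - α) := sum_rpow_le hα0 hα1 N

end AuxA
section AuxMain
variable {m : ℕ → ℕ}

lemma abs_sub_le' (a b : ℂ) : ‖a - b‖ ≤ ‖a‖ + ‖b‖ := by
  simpa using norm_sub_le a b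

lemma rhs_lower (hm : ∀ k, 2 ≤ m k) {α : ℝ} (hα0 : 0 < α) (hα1 : α < 1)
    {A' s' : ℕ} (hs' : s' ≤ A') {x : G m} (hx : x ∈ Icyl m s') :
    (M m s' : ℝ) ^ (1 - α) ≤
      ∑ l ∈ Finset.range (A' + 1), (M m l : ℝ) ^ (-α) * ‖D m (M m l) x‖ := by
  have hterm : (M m s' : ℝ) ^ (-α) * ‖D m (M m s') x‖
      = (M m s' : ℝ) ^ (1 - α) := by
    rw [D_M_eq hm s' x, if_pos hx]
    have hMpos : (0:ℝ) < (M m s' : ℝ) := by exact_mod_cast M_pos hm s'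
    rw [Complex.norm_natCast]
    calc (M m s' : ℝ) ^ (-α) * (M m s' : ℝ)
        = (M m s' : ℝ) ^ (-α) * (M m s' : ℝ) ^ (1:ℝ) := by rw [Real.rpow_one]
      _ = (M m s' : ℝ) ^ (-α + 1) := (Real.rpow_add hMpos _ _).symm
      _ = (M m s' : ℝ) ^ (1 - α) := by ring_nf
  rw [← hterm]
  apply Finset.single_le_sum (f := fun l => (M m l : ℝ) ^ (-α) * ‖D m (M m l) x‖)
  · intro l _
    apply mul_nonneg (Real.rpow_nonneg (Nat.cast_nonneg _) _) (norm_nonneg _)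
  · exact Finset.mem_range.mpr (by omega)

lemma main_est {α : ℝ} (hα0 : 0 < α) (hα1 : α < 1) {B : ℕ}
    (hm : ∀ k, 2 ≤ m k) (hB : ∀ k, m k ≤ B) (A' n : ℕ)
    (h1 : M m A' ≤ n) (h2 : n < M m (A' + 1)) (x : G m) :
    ‖∑ ν ∈ Finset.range n, ((A (-α) (n - 1 - ν) : ℝ) : ℂ) * psi m ν x‖ ≤
      ((4 * B + 1 : ℝ) / (1 - α)) *
        ∑ l ∈ Finset.range (A' + 1), (M m l : ℝ) ^ (-α) * ‖D m (M m l) x‖ := by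
  classical
  have hp : (0:ℝ) < 1 - α := by linarith
  have hB1 : 1 ≤ B := le_trans (by omega) (le_trans (hm 0) (hB 0))
  have hBR : (1:ℝ) ≤ (B:ℝ) := by exact_mod_cast hB1
  have hApos : ∀ k, 0 < A (-α) k := A_pos hα1
  have hAanti : Antitone (A (-α)) := A_antitone hα0 hα1
  set Sl := ∑ l ∈ Finset.range (A' + 1), (M m l : ℝ) ^ (-α) * ‖D m (M m l) x‖
    with hSl
  have hSl_nonneg : 0 ≤ Sl := by
    apply Finset.sum_nonneg
    intro l _
    exact mul_nonneg (Real.rpow_nonneg (Nat.cast_nonneg _) _) (norm_nonneg _)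
  by_cases hcase : ∃ j, j ≤ A' ∧ x j ≠ 0
  · -- main case
    obtain ⟨j0, hj0A, hj0⟩ := hcase
    have hex : ∃ j, x j ≠ 0 := ⟨j0, hj0⟩
    set s := Nat.find hex with hsdef
    have hxs : x s ≠ 0 := Nat.find_spec hex
    have hsle : s ≤ A' := le_trans (Nat.find_le hj0) hj0A
    have hxI : x ∈ Icyl m s := fun j hj => by
      by_contra hne
      exact absurd (Nat.find_le (p := fun j => x j ≠ 0) hne) (by omega)
    set Ms := M m s with hMsdef
    have hMs : 0 < Ms := M_pos hm s
    set Q := n / Ms with hQdef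
    set R := n % Ms with hRdef
    have hR : R < Ms := Nat.mod_lt _ hMs
    have hn' : n = Q * Ms + R := by
      rw [hQdef, hRdef, Nat.mul_comm]
      exact (Nat.div_add_mod n Ms).symm
    have hQ1 : 1 ≤ Q := by
      rw [hQdef]
      apply Nat.one_le_div_iff hMs |>.mpr
      exact le_trans (M_mono hm hsle) h1
    -- coefficients
    set aR : ℕ → ℝ := fun ν => A (-α) (n - 1 - ν) with haR
    set b : ℕ → ℝ := fun t =>
      if t < Q then ∑ r ∈ Finset.range Ms, aR (t * Ms + r)
      else ∑ r ∈ Finset.range R, aR (Q * Ms + r) with hbdef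
    -- Step A : regroup the sum in blocks
    have hF : (∑ ν ∈ Finset.range n, ((aR ν : ℝ) : ℂ) * psi m ν x)
        = ∑ t ∈ Finset.range (Q + 1), ((b t : ℝ) : ℂ) * psi m (t * Ms) x := by
      conv_lhs => rw [hn']
      rw [sum_range_blocks (fun ν => ((aR ν : ℝ) : ℂ) * psi m ν x) Q Ms R,
        Finset.sum_range_succ]
      congr 1
      · apply Finset.sum_congr rfl
        intro t ht
        rw [Finset.mem_range] at ht
        have hbt : b t = ∑ r ∈ Finset.range Ms, aR (t * Ms + r) := by
          rw [hbdef]; simp [ht]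
        rw [hbt]
        push_cast
        rw [Finset.sum_mul]
        apply Finset.sum_congr rfl
        intro r hr
        rw [Finset.mem_range] at hr
        rw [psi_mul hm hr x, psi_cyl_eq_one hm hxI hr, mul_one]
      · have hbQ : b Q = ∑ r ∈ Finset.range R, aR (Q * Ms + r) := by
          rw [hbdef]; simp
        rw [hbQ]
        push_cast
        rw [Finset.sum_mul]
        apply Finset.sum_congr rfl
        intro r hr
        rw [Finset.mem_range] at hr
        rw [psi_mul hm (lt_trans hr hR) x, psi_cyl_eq_one hm hxI (lt_trans hr hR), mul_one]
    -- partial sums bound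
    have hP : ∀ T : ℕ, ‖∑ t ∈ Finset.range T, psi m (t * Ms) x‖ ≤ (m s : ℝ) :=
      fun T => abs_partial_psi_le hm hxs T
    -- Abel summation
    have habel := Finset.sum_range_by_parts (fun t => ((b t : ℝ) : ℂ))
      (fun t => psi m (t * Ms) x) (Q + 1)
    simp only [Nat.add_sub_cancel, smul_eq_mul] at habel
    -- bounds on b
    set Smax := ∑ k ∈ Finset.range Ms, A (-α) k with hSmax
    have hb_nonneg : ∀ t, 0 ≤ b t := by
      intro t
      rw [hbdef]
      by_cases ht : t < Q <;> simp [ht] <;>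
        exact Finset.sum_nonneg fun r _ => (hApos _).le
    have hb_le : ∀ t, t < Q → b t ≤ Smax := by
      intro t ht
      have hbt : b t = ∑ r ∈ Finset.range Ms, aR (t * Ms + r) := by
        rw [hbdef]; simp [ht]
      rw [hbt, hSmax, ← Finset.sum_range_reflect (fun k => A (-α) k) Ms]
      apply Finset.sum_le_sum
      intro r hr
      rw [Finset.mem_range] at hr
      apply hAanti
      have htn : t * Ms + Ms ≤ n := by
        calc t * Ms + Ms = (t + 1) * Ms := by ring
          _ ≤ Q * Ms := Nat.mul_le_mul_right _ (by omega)
          _ ≤ n := by omega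
      omega
    have hbQval : b Q = ∑ r ∈ Finset.range R, aR (Q * Ms + r) := by
      rw [hbdef]; simp
    have hbQ_le : b Q ≤ Smax := by
      rw [hbQval, hSmax]
      calc ∑ r ∈ Finset.range R, aR (Q * Ms + r)
          ≤ ∑ r ∈ Finset.range R, A (-α) (R - 1 - r) := by
            apply Finset.sum_le_sum
            intro r hr
            apply hAanti
            omega
        _ = ∑ k ∈ Finset.range R, A (-α) k :=
            Finset.sum_range_reflect (fun k => A (-α) k) R
        _ ≤ ∑ k ∈ Finset.range Ms, A (-α) k := by
            apply Finset.sum_le_sum_of_subset_of_nonneg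
              (Finset.range_subset_range.mpr hR.le)
            intro k _ _
            exact (hApos k).le
    have hb_mono : ∀ i, i + 1 < Q → b i ≤ b (i + 1) := by
      intro i hi
      have h1' : b i = ∑ r ∈ Finset.range Ms, aR (i * Ms + r) := by
        rw [hbdef]; simp [show i < Q by omega]
      have h2' : b (i+1) = ∑ r ∈ Finset.range Ms, aR ((i+1) * Ms + r) := by
        rw [hbdef]; simp [hi]
      rw [h1', h2']
      apply Finset.sum_le_sum
      intro r _
      apply hAanti
      have : i * Ms ≤ (i+1) * Ms := Nat.mul_le_mul_right _ (by omega)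
      omega
    -- sum of increments
    have hIncr : ∑ i ∈ Finset.range Q, |b (i+1) - b i| ≤ 3 * Smax := by
      obtain ⟨Q', hQ'⟩ : ∃ Q', Q = Q' + 1 := ⟨Q - 1, by omega⟩
      rw [hQ', Finset.sum_range_succ]
      have hmain : ∑ i ∈ Finset.range Q', |b (i+1) - b i|
          = b Q' - b 0 := by
        calc ∑ i ∈ Finset.range Q', |b (i+1) - b i|
            = ∑ i ∈ Finset.range Q', (b (i+1) - b i) := by
              apply Finset.sum_congr rfl
              intro i hi
              rw [Finset.mem_range] at hi
              exact _root_.abs_of_nonneg (sub_nonneg.mpr (hb_mono i (by omega)))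
          _ = b Q' - b 0 := Finset.sum_range_sub b Q'
      have hQ'lt : Q' < Q := by omega
      have h3 : |b (Q' + 1) - b Q'| ≤ Smax := by
        rw [← hQ', abs_le]
        constructor
        · have := hb_le Q' hQ'lt
          have := hb_nonneg Q
          linarith
        · have := hbQ_le
          have := hb_nonneg Q'
          linarith
      have h4 : b Q' - b 0 ≤ Smax := by
        have := hb_le Q' hQ'lt
        have := hb_nonneg 0
        linarith
      have h5 : 0 ≤ Smax := Finset.sum_nonneg fun k _ => (hApos k).le
      linarith [hmain, h3, h4, hb_nonneg 0]
    -- assemble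
    have hSmax_nonneg : 0 ≤ Smax :=
      Finset.sum_nonneg fun k _ => (hApos k).le
    have hms : (m s : ℝ) ≤ (B : ℝ) := by exact_mod_cast hB s
    have hms0 : (0:ℝ) ≤ (m s : ℝ) := Nat.cast_nonneg _
    have hFbound : ‖∑ ν ∈ Finset.range n, ((aR ν : ℝ) : ℂ) * psi m ν x‖
        ≤ 4 * (B : ℝ) * Smax := by
      rw [hF, habel]
      calc ‖((b Q : ℝ) : ℂ) * (∑ t ∈ Finset.range (Q+1), psi m (t * Ms) x)
            - ∑ i ∈ Finset.range Q, (((b (i+1) : ℝ) : ℂ) - ((b i : ℝ):ℂ)) *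
                ∑ t ∈ Finset.range (i+1), psi m (t * Ms) x‖
          ≤ ‖((b Q : ℝ) : ℂ) * (∑ t ∈ Finset.range (Q+1), psi m (t * Ms) x)‖
            + ‖∑ i ∈ Finset.range Q, (((b (i+1) : ℝ) : ℂ) - ((b i : ℝ):ℂ)) *
                ∑ t ∈ Finset.range (i+1), psi m (t * Ms) x‖ := abs_sub_le' _ _
        _ ≤ |b Q| * (m s : ℝ)
            + ∑ i ∈ Finset.range Q, |b (i+1) - b i| * (m s : ℝ) := by
            apply add_le_add
            · rw [norm_mul, Complex.norm_real, Real.norm_eq_abs]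
              exact mul_le_mul_of_nonneg_left (hP _) (abs_nonneg _)
            · calc ‖∑ i ∈ Finset.range Q, (((b (i+1) : ℝ) : ℂ) - ((b i : ℝ):ℂ)) *
                    ∑ t ∈ Finset.range (i+1), psi m (t * Ms) x‖
                  ≤ ∑ i ∈ Finset.range Q, ‖(((b (i+1) : ℝ) : ℂ) - ((b i : ℝ):ℂ)) *
                    ∑ t ∈ Finset.range (i+1), psi m (t * Ms) x‖ := norm_sum_le _ _
                _ ≤ ∑ i ∈ Finset.range Q, |b (i+1) - b i| * (m s : ℝ) := by
                    apply Finset.sum_le_sum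
                    intro i _
                    rw [norm_mul]
                    rw [show (((b (i+1) : ℝ) : ℂ) - ((b i : ℝ):ℂ)) = ((b (i+1) - b i : ℝ) : ℂ)
                      by push_cast; ring, Complex.norm_real, Real.norm_eq_abs]
                    exact mul_le_mul_of_nonneg_left (hP _) (abs_nonneg _)
        _ ≤ Smax * (m s : ℝ) + 3 * Smax * (m s : ℝ) := by
            apply add_le_add
            · apply mul_le_mul_of_nonneg_right _ hms0
              rw [_root_.abs_of_nonneg (hb_nonneg _)]
              exact hbQ_le
            · rw [← Finset.sum_mul]
              exact mul_le_mul_of_nonneg_right hIncr hms0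
        _ = 4 * (m s : ℝ) * Smax := by ring
        _ ≤ 4 * (B : ℝ) * Smax := by nlinarith
    -- conclude case 1
    have hSmax_le : Smax ≤ (Ms : ℝ) ^ (1 - α) / (1 - α) := sum_A_le hα0 hα1 Ms
    have hlow : (Ms : ℝ) ^ (1 - α) ≤ Sl := rhs_lower hm hα0 hα1 hsle hxI
    calc ‖∑ ν ∈ Finset.range n, ((A (-α) (n - 1 - ν) : ℝ) : ℂ) * psi m ν x‖
        ≤ 4 * (B : ℝ) * Smax := hFbound
      _ ≤ 4 * (B : ℝ) * ((Ms : ℝ) ^ (1 - α) / (1 - α)) := by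
          apply mul_le_mul_of_nonneg_left hSmax_le (by positivity)
      _ ≤ 4 * (B : ℝ) * (Sl / (1 - α)) := by
          apply mul_le_mul_of_nonneg_left _ (by positivity)
          exact (div_le_div_iff_of_pos_right hp).mpr hlow
      _ ≤ ((4 * B + 1 : ℝ) / (1 - α)) * Sl := by
          rw [div_mul_eq_mul_div, mul_comm (4 * (B:ℝ)) (Sl / (1-α)), div_mul_eq_mul_div]
          apply (div_le_div_iff_of_pos_right hp).mpr
          nlinarith
  · -- trivial case : x ∈ Icyl m A'
    push_neg at hcase
    have hxI : x ∈ Icyl m A' := fun j hj => hcase j (by omega)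
    have htriv : ‖∑ ν ∈ Finset.range n, ((A (-α) (n - 1 - ν) : ℝ) : ℂ) * psi m ν x‖
        ≤ ∑ k ∈ Finset.range n, A (-α) k := by
      calc ‖∑ ν ∈ Finset.range n, ((A (-α) (n - 1 - ν) : ℝ) : ℂ) * psi m ν x‖
          ≤ ∑ ν ∈ Finset.range n, ‖((A (-α) (n - 1 - ν) : ℝ) : ℂ) * psi m ν x‖ :=
            norm_sum_le _ _
        _ = ∑ ν ∈ Finset.range n, A (-α) (n - 1 - ν) := by
            apply Finset.sum_congr rfl
            intro ν _
            rw [norm_mul, Complex.norm_real, Real.norm_eq_abs, abs_psi, mul_one,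
              _root_.abs_of_nonneg (A_pos hα1 _).le]
        _ = ∑ k ∈ Finset.range n, A (-α) k :=
            Finset.sum_range_reflect (fun k => A (-α) k) n
    have h1' : ∑ k ∈ Finset.range n, A (-α) k ≤ (n : ℝ) ^ (1 - α) / (1 - α) :=
      sum_A_le hα0 hα1 n
    have hnB : (n : ℝ) ≤ (B : ℝ) * (M m A' : ℝ) := by
      have h : n < B * M m A' := by
        calc n < M m (A' + 1) := h2
          _ = m A' * M m A' := rfl
          _ ≤ B * M m A' := Nat.mul_le_mul_right _ (hB A')
      exact_mod_cast h.le
    have hMA'pos : (0:ℝ) < (M m A' : ℝ) := by exact_mod_cast M_pos hm A'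
    have h2' : (n : ℝ) ^ (1 - α) ≤ (B : ℝ) * (M m A' : ℝ) ^ (1 - α) := by
      calc (n : ℝ) ^ (1 - α) ≤ ((B : ℝ) * (M m A' : ℝ)) ^ (1 - α) :=
          Real.rpow_le_rpow (Nat.cast_nonneg n) hnB hp.le
        _ = (B : ℝ) ^ (1 - α) * (M m A' : ℝ) ^ (1 - α) :=
          Real.mul_rpow (by positivity) hMA'pos.le
        _ ≤ (B : ℝ) * (M m A' : ℝ) ^ (1 - α) := by
          apply mul_le_mul_of_nonneg_right _ (Real.rpow_nonneg hMA'pos.le _)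
          calc (B : ℝ) ^ (1 - α) ≤ (B : ℝ) ^ (1:ℝ) :=
              Real.rpow_le_rpow_of_exponent_le hBR (by linarith)
            _ = (B : ℝ) := Real.rpow_one _
    have hlow : (M m A' : ℝ) ^ (1 - α) ≤ Sl := rhs_lower hm hα0 hα1 le_rfl hxI
    calc ‖∑ ν ∈ Finset.range n, ((A (-α) (n - 1 - ν) : ℝ) : ℂ) * psi m ν x‖
        ≤ ∑ k ∈ Finset.range n, A (-α) k := htriv
      _ ≤ (n : ℝ) ^ (1 - α) / (1 - α) := h1'
      _ ≤ (B : ℝ) * (M m A' : ℝ) ^ (1 - α) / (1 - α) := by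
          exact (div_le_div_iff_of_pos_right hp).mpr h2'
      _ ≤ (B : ℝ) * Sl / (1 - α) := by
          apply (div_le_div_iff_of_pos_right hp).mpr
          exact mul_le_mul_of_nonneg_left hlow (by positivity)
      _ ≤ ((4 * B + 1 : ℝ) / (1 - α)) * Sl := by
          rw [div_mul_eq_mul_div]
          apply (div_le_div_iff_of_pos_right hp).mpr
          nlinarith

end AuxMain
/-- Lemma 2: `|K_n^{−α}(x)| ≤ (c(α)/|A_{n−1}^{−α}|) ∑_{l=0}^{A} M_l^{−α} D_{M_l}(x)`. -/
theorem lemma2 (α : ℝ) (hα0 : 0 < α) (hα1 : α < 1) (B : ℕ) :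
    ∃ c : ℝ, 0 < c ∧ ∀ (m : ℕ → ℕ), (∀ k, 2 ≤ m k) → (∀ k, m k ≤ B) →
      ∀ (A' n : ℕ), M m A' ≤ n → n < M m (A' + 1) → ∀ x : G m,
        ‖K m (-α) n x‖ ≤
          c / |A (-α) (n - 1)| *
            ∑ l ∈ Finset.range (A' + 1),
              (M m l : ℝ) ^ (-α) * ‖D m (M m l) x‖ := by
  refine ⟨(4 * B + 1 : ℝ) / (1 - α), by
    apply div_pos (by positivity) (by linarith), ?_⟩
  intro m hm hB A' n h1 h2 x
  have hApos : 0 < A (-α) (n - 1) := A_pos hα1 _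
  have hK : K m (-α) n x = ((A (-α) (n - 1) : ℝ) : ℂ)⁻¹ *
      ∑ ν ∈ Finset.range n, ((A (-α) (n - 1 - ν) : ℝ) : ℂ) * psi m ν x := rfl
  rw [hK, norm_mul, norm_inv, Complex.norm_real, Real.norm_eq_abs, _root_.abs_of_pos hApos]
  rw [inv_mul_eq_div, div_mul_eq_mul_div]
  exact (div_le_div_iff_of_pos_right hApos).mpr (main_est hα0 hα1 hm hB A' n h1 h2 x)

end Vilenkin
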